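/- Let H ∈ ℝ^{m×d} have full row rank, i.e., H·Hᵀ is invertible, and let m₀ ∈ ℝ^d, y ∈ ℝ^m. For η > 0 set W(η) := η·H·Hᵀ and Y(η) := I + Hᵀ·W(η)⁻¹·H. Then Y(η)⁻¹·(m₀ + Hᵀ·W(η)⁻¹·y) tends to m₀ + Hᵀ·(H·Hᵀ)⁻¹·(y − H·m₀) as η → 0⁺. (Connection of MAS with DDNM: in the full-row-rank case H† = Hᵀ·(H·Hᵀ)⁻¹, so the limit is the DDNM update m₀ + H†·(y − H·m₀).) -/

import Mathlib

open Matrix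

lemma mas_aux {m d : ℕ} (H : Matrix (Fin m) (Fin d) ℝ) (B : Matrix (Fin d) (Fin m) ℝ)
    (hHB : H * B = 1) (η : ℝ) (hη0 : η ≠ 0) (hη1 : η + 1 ≠ 0)
    (m₀ : Fin d → ℝ) (y : Fin m → ℝ) :
    ((1 : Matrix (Fin d) (Fin d) ℝ) + η⁻¹ • (B * H))⁻¹ *ᵥ (m₀ + η⁻¹ • (B *ᵥ y))
      = m₀ + (η + 1)⁻¹ • (B *ᵥ y - (B * H) *ᵥ m₀) := by
  have hPP : (B * H) * (B * H) = B * H := by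
    rw [Matrix.mul_assoc, ← Matrix.mul_assoc H B H, hHB, Matrix.one_mul]
  have hPB : (B * H) * B = B := by rw [Matrix.mul_assoc, hHB, Matrix.mul_one]
  have hYinv : ((1 : Matrix (Fin d) (Fin d) ℝ) + η⁻¹ • (B * H))⁻¹
      = 1 - (η + 1)⁻¹ • (B * H) := by
    apply Matrix.inv_eq_right_inv
    have hc : η⁻¹ - (η + 1)⁻¹ - η⁻¹ * (η + 1)⁻¹ = 0 := by field_simp; ring
    calc ((1 : Matrix (Fin d) (Fin d) ℝ) + η⁻¹ • (B * H))
          * (1 - (η + 1)⁻¹ • (B * H))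
        = 1 + (η⁻¹ - (η + 1)⁻¹ - η⁻¹ * (η + 1)⁻¹) • (B * H) := by
          simp only [mul_sub, add_mul, one_mul, mul_one, Matrix.smul_mul,
            Matrix.mul_smul, hPP, smul_smul, sub_smul]
          rw [mul_comm ((η + 1)⁻¹) η⁻¹]
          abel
      _ = 1 := by rw [hc, zero_smul, add_zero]
  rw [hYinv]
  simp only [Matrix.sub_mulVec, Matrix.one_mulVec, Matrix.mulVec_add,
    Matrix.mulVec_smul, Matrix.smul_mulVec, Matrix.mulVec_mulVec,
    Matrix.sub_mul, Matrix.one_mul, Matrix.smul_mul, hPB]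
  match_scalars <;> field_simp <;> ring

/-- **MAS recovers DDNM (Remark 1).**
If `H` has full row rank (`H Hᵀ` invertible), then with `W(η) := η H Hᵀ` and
`Y(η) := I + Hᵀ W(η)⁻¹ H`, the MAS solution `Y(η)⁻¹ (m₀ + Hᵀ W(η)⁻¹ y)` tends, as
`η → 0⁺`, to the DDNM update `m₀ + Hᵀ (H Hᵀ)⁻¹ (y − H m₀)`. -/
theorem mas_tendsto_ddnm {m d : ℕ} (H : Matrix (Fin m) (Fin d) ℝ)
    (hH : IsUnit (H * Hᵀ)) (m₀ : Fin d → ℝ) (y : Fin m → ℝ) :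
    Filter.Tendsto
      (fun η : ℝ =>
        ((1 : Matrix (Fin d) (Fin d) ℝ) + Hᵀ * (η • (H * Hᵀ))⁻¹ * H)⁻¹ *ᵥ
          (m₀ + Hᵀ *ᵥ ((η • (H * Hᵀ))⁻¹ *ᵥ y)))
      (nhdsWithin 0 (Set.Ioi 0))
      (nhds (m₀ + Hᵀ *ᵥ ((H * Hᵀ)⁻¹ *ᵥ (y - H *ᵥ m₀)))) := by
  have hdet : IsUnit (H * Hᵀ).det := (Matrix.isUnit_iff_isUnit_det _).mp hH
  have hHB : H * (Hᵀ * (H * Hᵀ)⁻¹) = 1 := by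
    rw [← Matrix.mul_assoc, Matrix.mul_nonsing_inv _ hdet]
  have hvv : Hᵀ *ᵥ ((H * Hᵀ)⁻¹ *ᵥ (y - H *ᵥ m₀))
      = (Hᵀ * (H * Hᵀ)⁻¹) *ᵥ y - ((Hᵀ * (H * Hᵀ)⁻¹) * H) *ᵥ m₀ := by
    rw [Matrix.mulVec_mulVec, Matrix.mulVec_sub, Matrix.mulVec_mulVec]
  have key : ∀ η ∈ Set.Ioi (0 : ℝ),
      ((1 : Matrix (Fin d) (Fin d) ℝ) + Hᵀ * (η • (H * Hᵀ))⁻¹ * H)⁻¹ *ᵥ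
          (m₀ + Hᵀ *ᵥ ((η • (H * Hᵀ))⁻¹ *ᵥ y))
        = m₀ + (η + 1)⁻¹ • (Hᵀ *ᵥ ((H * Hᵀ)⁻¹ *ᵥ (y - H *ᵥ m₀))) := by
    intro η hη
    have hηpos : (0 : ℝ) < η := hη
    have hη0 : η ≠ 0 := ne_of_gt hηpos
    have hη1 : η + 1 ≠ 0 := ne_of_gt (by linarith)
    have hsm : (η • (H * Hᵀ))⁻¹ = η⁻¹ • (H * Hᵀ)⁻¹ := by
      refine Matrix.inv_eq_left_inv ?_
      rw [Matrix.smul_mul, Matrix.mul_smul, Matrix.nonsing_inv_mul _ hdet,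
        smul_smul, inv_mul_cancel₀ hη0, one_smul]
    have e1 : Hᵀ * (η • (H * Hᵀ))⁻¹ * H = η⁻¹ • ((Hᵀ * (H * Hᵀ)⁻¹) * H) := by
      rw [hsm, Matrix.mul_smul, Matrix.smul_mul]
    have e2 : Hᵀ *ᵥ ((η • (H * Hᵀ))⁻¹ *ᵥ y)
        = η⁻¹ • ((Hᵀ * (H * Hᵀ)⁻¹) *ᵥ y) := by
      rw [hsm, Matrix.smul_mulVec, Matrix.mulVec_smul, Matrix.mulVec_mulVec]
    rw [e1, e2, hvv]
    exact mas_aux H (Hᵀ * (H * Hᵀ)⁻¹) hHB η hη0 hη1 m₀ y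
  set v := Hᵀ *ᵥ ((H * Hᵀ)⁻¹ *ᵥ (y - H *ᵥ m₀)) with hv
  have h2 : Filter.Tendsto (fun η : ℝ => η + 1) (nhds 0) (nhds (0 + 1)) :=
    Filter.tendsto_id.add tendsto_const_nhds
  have h1 : Filter.Tendsto (fun η : ℝ => (η + 1)⁻¹) (nhds 0) (nhds 1) := by
    have := h2.inv₀ (by norm_num)
    simpa using this
  have hlim0 : Filter.Tendsto (fun η : ℝ => m₀ + (η + 1)⁻¹ • v) (nhds 0)
      (nhds (m₀ + v)) := by
    simpa using tendsto_const_nhds.add (h1.smul_const v)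
  have hlim : Filter.Tendsto (fun η : ℝ => m₀ + (η + 1)⁻¹ • v)
      (nhdsWithin 0 (Set.Ioi 0)) (nhds (m₀ + v)) :=
    hlim0.mono_left nhdsWithin_le_nhds
  exact hlim.congr'
    (Filter.eventuallyEq_of_mem self_mem_nhdsWithin fun η hη => (key η hη).symm)
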